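/- In the SFBF setup, for every solution x* ∈ 𝒳_* of VI(T,𝒳) and every n ≥ 0, P-almost surely E[‖X_{n+1} − x*‖² | F_n] ≤ ‖X_n − x*‖² − (ρ_n/2)·r_{α_n}(X_n)² + (κ_n/m_{n+1})·(σ₀²‖X_n − x*‖² + σ(x*)²), where ρ_n = 1 − 2L²α_n², κ_n = α_n² C₂² [2(4+ρ_n) + 16(1 + α_n L + α_n σ₀ G_{n,2})²], G_{n,2} = C₂/√(m_{n+1}), and C₂ is the Burkholder–Davis–Gundy constant for which the conditional oracle bounds E[‖W_{n+1}‖²|F_n]^{1/2} ≤ G_{n,2}(σ(x*)+σ₀‖X_n−x*‖) and E[‖Z_{n+1}‖²|F̂_n]^{1/2} ≤ G_{n,2}(σ(x*)+σ₀‖Y_n−x*‖) hold almost surely. -/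

import Mathlib

set_option maxHeartbeats 2000000

open MeasureTheory
open scoped RealInnerProductSpace

/-- condexp commutes with continuous linear maps. -/
lemma aux_condExp_clm {α : Type*} {m m0 : MeasurableSpace α} (hm : m ≤ m0) {μ : Measure α}
    [IsFiniteMeasure μ] {E F : Type*}
    [NormedAddCommGroup E] [NormedSpace ℝ E] [CompleteSpace E]
    [NormedAddCommGroup F] [NormedSpace ℝ F] [CompleteSpace F]
    (ℓ : E →L[ℝ] F) {f : α → E} (hf : Integrable f μ) :
    μ[(fun ω => ℓ (f ω))|m] =ᵐ[μ] fun ω => ℓ ((μ[f|m]) ω) := by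
  refine (ae_eq_condExp_of_forall_setIntegral_eq hm (ℓ.integrable_comp hf)
    (fun s _ _ => (ℓ.integrable_comp integrable_condExp).integrableOn)
    (fun s hs hμs => ?_)
    (ℓ.continuous.comp_aestronglyMeasurable stronglyMeasurable_condExp.aestronglyMeasurable)).symm
  rw [ContinuousLinearMap.integral_comp_comm ℓ integrable_condExp.integrableOn,
    ContinuousLinearMap.integral_comp_comm ℓ hf.integrableOn,
    setIntegral_condExp hm hf hs]

lemma aux_rpow_sq {c b : ℝ} (hc : 0 ≤ c) (h : c ^ ((1:ℝ)/2) ≤ b) : c ≤ b ^ 2 := by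
  have h2 : (c ^ ((1:ℝ)/2)) ^ 2 ≤ b ^ 2 := pow_le_pow_left₀ (Real.rpow_nonneg hc _) h 2
  calc c = (c ^ ((1:ℝ)/2)) ^ 2 := by
        rw [← Real.rpow_natCast (c ^ ((1:ℝ)/2)) 2, ← Real.rpow_mul hc]
        norm_num
    _ ≤ b ^ 2 := h2

section Det

variable {H : Type*} [NormedAddCommGroup H] [InnerProductSpace ℝ H]

lemma aux_proj_fix {𝒳 : Set H} (proj : H → H)
    (hchar : ∀ x, ∀ y ∈ 𝒳, ⟪x - proj x, y - proj x⟫ ≤ 0) {s : H} (hs : s ∈ 𝒳) :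
    proj s = s := by
  have h := hchar s s hs
  have h2 : ‖s - proj s‖ ^ 2 ≤ 0 := by rw [← real_inner_self_eq_norm_sq]; exact h
  have h3 : ‖s - proj s‖ = 0 := by nlinarith [norm_nonneg (s - proj s)]
  exact (sub_eq_zero.mp (norm_eq_zero.mp h3)).symm

lemma aux_proj_nonexp {𝒳 : Set H} (proj : H → H) (hmem : ∀ x, proj x ∈ 𝒳)
    (hchar : ∀ x, ∀ y ∈ 𝒳, ⟪x - proj x, y - proj x⟫ ≤ 0) (u v : H) :
    ‖proj u - proj v‖ ≤ ‖u - v‖ := by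
  have h1 := hchar u (proj v) (hmem v)
  have h2 := hchar v (proj u) (hmem u)
  have e : ⟪u - proj u, proj v - proj u⟫ + ⟪v - proj v, proj u - proj v⟫
      = ‖proj u - proj v‖ ^ 2 - ⟪u - v, proj u - proj v⟫ := by
    rw [← real_inner_self_eq_norm_sq]
    simp only [inner_sub_left, inner_sub_right, real_inner_comm]
    ring
  have h3 : ‖proj u - proj v‖ ^ 2 ≤ ⟪u - v, proj u - proj v⟫ := by linarith
  have h4 := real_inner_le_norm (u - v) (proj u - proj v)
  rcases eq_or_lt_of_le (norm_nonneg (proj u - proj v)) with h0 | h0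
  · rw [← h0]; exact norm_nonneg _
  · nlinarith

lemma aux_det_Y (a L : ℝ) (ha : 0 ≤ a) (hL : 0 ≤ L)
    (x xs y Aa Tx Txs : H)
    (hproj : ⟪(x - a • Aa) - y, xs - y⟫ ≤ 0)
    (hsol : 0 ≤ ⟪Txs, y - xs⟫)
    (hTlip : ‖Tx - Txs‖ ≤ L * ‖x - xs‖) :
    ‖y - xs‖ ≤ (1 + a * L) * ‖x - xs‖ + a * ‖Aa - Tx‖ := by
  have h1 : ‖y - xs‖ ^ 2 ≤ ⟪(x - xs) - a • (Aa - Txs), y - xs⟫ := by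
    have e : ⟪(x - a • Aa) - y, xs - y⟫
        = -⟪(x - xs) - a • (Aa - Txs), y - xs⟫ + a * ⟪Txs, y - xs⟫ + ‖y - xs‖ ^ 2 := by
      rw [← real_inner_self_eq_norm_sq]
      simp only [inner_add_left, inner_add_right, inner_sub_left, inner_sub_right,
        real_inner_smul_left, real_inner_smul_right, smul_sub, smul_add, real_inner_comm]
      ring
    nlinarith [hproj, mul_nonneg ha hsol]
  have h2 : ⟪(x - xs) - a • (Aa - Txs), y - xs⟫ ≤ ‖(x - xs) - a • (Aa - Txs)‖ * ‖y - xs‖ :=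
    real_inner_le_norm _ _
  have h3 : ‖(x - xs) - a • (Aa - Txs)‖ ≤ (1 + a * L) * ‖x - xs‖ + a * ‖Aa - Tx‖ := by
    have e : (x - xs) - a • (Aa - Txs) = ((x - xs) - a • (Tx - Txs)) - a • (Aa - Tx) := by
      rw [smul_sub, smul_sub, smul_sub]; abel
    have hs1 : ‖a • (Tx - Txs)‖ = a * ‖Tx - Txs‖ := by
      rw [norm_smul, Real.norm_eq_abs, abs_of_nonneg ha]
    have hs2 : ‖a • (Aa - Tx)‖ = a * ‖Aa - Tx‖ := by
      rw [norm_smul, Real.norm_eq_abs, abs_of_nonneg ha]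
    have t1 : ‖(x - xs) - a • (Aa - Txs)‖
        ≤ ‖(x - xs) - a • (Tx - Txs)‖ + ‖a • (Aa - Tx)‖ := by
      rw [e]; exact norm_sub_le _ _
    have t2 : ‖(x - xs) - a • (Tx - Txs)‖ ≤ ‖x - xs‖ + ‖a • (Tx - Txs)‖ := norm_sub_le _ _
    rw [hs2] at t1
    rw [hs1] at t2
    have t3 : a * ‖Tx - Txs‖ ≤ a * (L * ‖x - xs‖) := mul_le_mul_of_nonneg_left hTlip ha
    nlinarith
  rcases eq_or_lt_of_le (norm_nonneg (y - xs)) with h0 | h0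
  · rw [← h0]
    have : 0 ≤ (1 + a * L) * ‖x - xs‖ + a * ‖Aa - Tx‖ := by positivity
    linarith
  · nlinarith [h1.trans h2]

lemma aux_det_key (a L : ℝ) (ha : 0 ≤ a) (hρ : 0 ≤ 1 - 2 * L ^ 2 * a ^ 2)
    (x xs y w z Tx Ty : H) (r : ℝ)
    (hTlip : ‖Tx - Ty‖ ≤ L * ‖x - y‖)
    (hTy : 0 ≤ ⟪Ty, y - xs⟫)
    (hproj : ⟪(x - a • (Tx + w)) - y, xs - y⟫ ≤ 0)
    (hr0 : 0 ≤ r)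
    (hr : r ≤ ‖x - y‖ + a * ‖w‖) :
    ‖(y + a • ((Tx + w) - (Ty + z))) - xs‖ ^ 2
      ≤ ‖x - xs‖ ^ 2 - ((1 - 2 * L ^ 2 * a ^ 2) / 2) * r ^ 2
        + 2 * a * ⟪z, xs - y⟫
        + (4 + (1 - 2 * L ^ 2 * a ^ 2)) * a ^ 2 * ‖w‖ ^ 2
        + 4 * a ^ 2 * ‖z‖ ^ 2 := by
  set ρ := 1 - 2 * L ^ 2 * a ^ 2 with hρdef
  set D : H := (Tx + w) - (Ty + z) with hD
  have e1 : ‖(y + a • D) - xs‖ ^ 2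
      = ‖y - xs‖ ^ 2 + 2 * a * ⟪D, y - xs⟫ + a ^ 2 * ‖D‖ ^ 2 := by
    have h : (y + a • D) - xs = (y - xs) + a • D := by abel
    rw [h, ← real_inner_self_eq_norm_sq, ← real_inner_self_eq_norm_sq,
      ← real_inner_self_eq_norm_sq]
    simp only [inner_add_left, inner_add_right, inner_sub_left, inner_sub_right,
      real_inner_smul_left, real_inner_smul_right, real_inner_comm]
    ring
  have e2 : ‖y - xs‖ ^ 2 = ‖x - xs‖ ^ 2 - ‖x - y‖ ^ 2 - 2 * ⟪x - y, y - xs⟫ := by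
    have h : x - xs = (x - y) + (y - xs) := by abel
    rw [h, ← real_inner_self_eq_norm_sq, ← real_inner_self_eq_norm_sq,
      ← real_inner_self_eq_norm_sq]
    simp only [inner_add_left, inner_add_right, inner_sub_left, inner_sub_right,
      real_inner_comm]
    ring
  have e3 : -(2 * ⟪x - y, y - xs⟫) ≤ -(2 * (a * ⟪Tx + w, y - xs⟫)) := by
    have e : ⟪(x - a • (Tx + w)) - y, xs - y⟫
        = -⟪x - y, y - xs⟫ + a * ⟪Tx + w, y - xs⟫ := by
      simp only [inner_add_left, inner_add_right, inner_sub_left, inner_sub_right,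
        real_inner_smul_left, real_inner_smul_right, smul_sub, smul_add, real_inner_comm]
      ring
    nlinarith [hproj]
  have e5 : ⟪D, y - xs⟫ = ⟪Tx + w, y - xs⟫ - ⟪Ty, y - xs⟫ - ⟪z, y - xs⟫ := by
    rw [hD]; simp only [inner_sub_left, inner_add_left]; ring
  have e4 : ‖D‖ ^ 2 ≤ 2 * L ^ 2 * ‖x - y‖ ^ 2 + 4 * ‖w‖ ^ 2 + 4 * ‖z‖ ^ 2 := by
    have hD2 : D = (Tx - Ty) + (w - z) := by rw [hD]; abel
    have h1 : ‖D‖ ≤ ‖Tx - Ty‖ + ‖w - z‖ := hD2 ▸ norm_add_le _ _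
    have h2 : ‖w - z‖ ≤ ‖w‖ + ‖z‖ := norm_sub_le _ _
    have hq1 : ‖D‖ ^ 2 ≤ (‖Tx - Ty‖ + ‖w - z‖) ^ 2 := pow_le_pow_left₀ (norm_nonneg _) h1 2
    have hq2 : ‖Tx - Ty‖ ^ 2 ≤ (L * ‖x - y‖) ^ 2 := pow_le_pow_left₀ (norm_nonneg _) hTlip 2
    have hq3 : ‖w - z‖ ^ 2 ≤ (‖w‖ + ‖z‖) ^ 2 := pow_le_pow_left₀ (norm_nonneg _) h2 2
    nlinarith [sq_nonneg (‖Tx - Ty‖ - ‖w - z‖), sq_nonneg (‖w‖ - ‖z‖)]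
  have e6 : r ^ 2 ≤ 2 * ‖x - y‖ ^ 2 + 2 * a ^ 2 * ‖w‖ ^ 2 := by
    have hq1 : r ^ 2 ≤ (‖x - y‖ + a * ‖w‖) ^ 2 := pow_le_pow_left₀ hr0 hr 2
    nlinarith [sq_nonneg (‖x - y‖ - a * ‖w‖)]
  have hzflip : ⟪z, y - xs⟫ = -⟪z, xs - y⟫ := by
    rw [← inner_neg_right]; congr 1; abel
  have c2 : -(2 * (a * ⟪Ty, y - xs⟫)) ≤ 0 := by
    have := mul_nonneg ha hTy
    linarith
  have c3 : a ^ 2 * ‖D‖ ^ 2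
      ≤ 2 * L ^ 2 * a ^ 2 * ‖x - y‖ ^ 2 + 4 * a ^ 2 * ‖w‖ ^ 2 + 4 * a ^ 2 * ‖z‖ ^ 2 := by
    have := mul_le_mul_of_nonneg_left e4 (sq_nonneg a)
    linarith [this]
  have hru : ρ * ‖x - y‖ ^ 2 = ‖x - y‖ ^ 2 - 2 * L ^ 2 * a ^ 2 * ‖x - y‖ ^ 2 := by
    rw [hρdef]; ring
  have key : ‖(y + a • D) - xs‖ ^ 2
      ≤ ‖x - xs‖ ^ 2 - ρ * ‖x - y‖ ^ 2 + 2 * a * ⟪z, xs - y⟫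
        + 4 * a ^ 2 * ‖w‖ ^ 2 + 4 * a ^ 2 * ‖z‖ ^ 2 := by
    rw [e1, e2, e5, hzflip]
    have expand : 2 * a * (⟪Tx + w, y - xs⟫ - ⟪Ty, y - xs⟫ - -⟪z, xs - y⟫)
        = 2 * (a * ⟪Tx + w, y - xs⟫) - 2 * (a * ⟪Ty, y - xs⟫) + 2 * a * ⟪z, xs - y⟫ := by
      ring
    rw [expand]
    linarith [e3, c2, c3, hru]
  have c4 : (ρ / 2) * r ^ 2 ≤ ρ * ‖x - y‖ ^ 2 + ρ * a ^ 2 * ‖w‖ ^ 2 := by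
    have := mul_le_mul_of_nonneg_left e6 (by linarith : (0:ℝ) ≤ ρ / 2)
    linarith [this]
  have expand2 : (4 + ρ) * a ^ 2 * ‖w‖ ^ 2
      = 4 * a ^ 2 * ‖w‖ ^ 2 + ρ * a ^ 2 * ‖w‖ ^ 2 := by ring
  calc ‖(y + a • D) - xs‖ ^ 2
      ≤ ‖x - xs‖ ^ 2 - ρ * ‖x - y‖ ^ 2 + 2 * a * ⟪z, xs - y⟫
        + 4 * a ^ 2 * ‖w‖ ^ 2 + 4 * a ^ 2 * ‖z‖ ^ 2 := key
    _ ≤ ‖x - xs‖ ^ 2 - (ρ / 2) * r ^ 2 + 2 * a * ⟪z, xs - y⟫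
        + (4 + ρ) * a ^ 2 * ‖w‖ ^ 2 + 4 * a ^ 2 * ‖z‖ ^ 2 := by
      rw [expand2]; linarith [c4]

end Det

theorem stmt_10 {d : ℕ} {Ω Ξ : Type*} [mΩ : MeasurableSpace Ω] [mΞ : MeasurableSpace Ξ]
    (μ : Measure Ω) [IsProbabilityMeasure μ]
    (P : Measure Ξ) [IsProbabilityMeasure P]
    (𝒳 : Set (EuclideanSpace ℝ (Fin d)))
    (h𝒳ne : 𝒳.Nonempty) (h𝒳cl : IsClosed 𝒳) (h𝒳cv : Convex ℝ 𝒳)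
    (proj : EuclideanSpace ℝ (Fin d) → EuclideanSpace ℝ (Fin d))
    (hproj_mem : ∀ x, proj x ∈ 𝒳)
    (hproj_char : ∀ x, ∀ y ∈ 𝒳, ⟪x - proj x, y - proj x⟫ ≤ 0)
    (F : EuclideanSpace ℝ (Fin d) → Ξ → EuclideanSpace ℝ (Fin d))
    (hFmeas : ∀ x, Measurable (F x))
    (T : EuclideanSpace ℝ (Fin d) → EuclideanSpace ℝ (Fin d))
    (hT : ∀ x, T x = ∫ z, F x z ∂P)
    (hTint : ∀ x, Integrable (fun z => F x z) P)
    (L : ℝ) (hL : 0 < L)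
    (hLip : ∀ x y, ‖T x - T y‖ ≤ L * ‖x - y‖)
    (hpm : ∀ x y, 0 ≤ ⟪T x, y - x⟫ → 0 ≤ ⟪T y, y - x⟫)
    (xs : EuclideanSpace ℝ (Fin d)) (hxs_mem : xs ∈ 𝒳)
    (hxs_sol : ∀ y ∈ 𝒳, 0 ≤ ⟪T xs, y - xs⟫)
    -- variance assumption at the solution `x*`
    (p σ₀ σs : ℝ) (hp : 2 ≤ p) (hσ₀ : 0 ≤ σ₀) (hσs : 0 ≤ σs)
    (hvar : ∀ x, (∫ z, ‖F x z - T x‖ ^ p ∂P) ^ (1 / p) ≤ σs + σ₀ * ‖x - xs‖)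
    -- step sizes and batch sizes
    (α : ℕ → ℝ) (hα : ∀ n, 0 < α n) (hαL : ∀ n, Real.sqrt 2 * L * α n < 1)
    (mb : ℕ → ℕ) (hmb : ∀ n, 1 ≤ mb n)
    -- filtrations and adapted processes
    (𝓕 𝓕hat : ℕ → MeasurableSpace Ω)
    (h𝓕le : ∀ n, 𝓕 n ≤ 𝓕hat n) (h𝓕hatle : ∀ n, 𝓕hat n ≤ 𝓕 (n + 1))
    (h𝓕Ω : ∀ n, 𝓕hat n ≤ mΩ)
    (X Y A B : ℕ → Ω → EuclideanSpace ℝ (Fin d))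
    (hXad : ∀ n, StronglyMeasurable[𝓕 n] (X n))
    (hAad : ∀ n, StronglyMeasurable[𝓕hat n] (A n))
    (hYad : ∀ n, StronglyMeasurable[𝓕hat n] (Y n))
    (hBad : ∀ n, StronglyMeasurable[𝓕 (n + 1)] (B n))
    -- the SFBF recursion
    (hY : ∀ n ω, Y n ω = proj (X n ω - α n • A n ω))
    (hX : ∀ n ω, X (n + 1) ω = Y n ω + α n • (A n ω - B n ω))
    -- integrability
    (hXint : ∀ n, Integrable (fun ω => ‖X n ω - xs‖ ^ 2) μ)
    (hWint : ∀ n, Integrable (fun ω => ‖A n ω - T (X n ω)‖ ^ 2) μ)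
    (hZint : ∀ n, Integrable (fun ω => ‖B n ω - T (Y n ω)‖ ^ 2) μ)
    (hAint : ∀ n, Integrable (A n) μ) (hBint : ∀ n, Integrable (B n) μ)
    (hTXint : ∀ n, Integrable (fun ω => T (X n ω)) μ)
    (hTYint : ∀ n, Integrable (fun ω => T (Y n ω)) μ)
    -- the oracle errors have zero conditional mean
    (hW0 : ∀ n, condExp (𝓕 n) μ (fun ω => A n ω - T (X n ω)) =ᵐ[μ] 0)
    (hZ0 : ∀ n, condExp (𝓕hat n) μ (fun ω => B n ω - T (Y n ω)) =ᵐ[μ] 0)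
    -- the conditional second-moment oracle bounds, with constant `C₂`
    (C₂ : ℝ) (hC₂ : 0 < C₂)
    (hWbd : ∀ n, ∀ᵐ ω ∂μ,
      (condExp (𝓕 n) μ (fun ω' => ‖A n ω' - T (X n ω')‖ ^ 2) ω) ^ ((1 : ℝ) / 2)
        ≤ (C₂ / Real.sqrt (mb (n + 1))) * (σs + σ₀ * ‖X n ω - xs‖))
    (hZbd : ∀ n, ∀ᵐ ω ∂μ,
      (condExp (𝓕hat n) μ (fun ω' => ‖B n ω' - T (Y n ω')‖ ^ 2) ω) ^ ((1 : ℝ) / 2)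
        ≤ (C₂ / Real.sqrt (mb (n + 1))) * (σs + σ₀ * ‖Y n ω - xs‖)) :
    ∀ n, ∀ᵐ ω ∂μ,
      condExp (𝓕 n) μ (fun ω' => ‖X (n + 1) ω' - xs‖ ^ 2) ω
        ≤ ‖X n ω - xs‖ ^ 2
          - ((1 - 2 * L ^ 2 * (α n) ^ 2) / 2) *
              ‖X n ω - proj (X n ω - α n • T (X n ω))‖ ^ 2
          + (((α n) ^ 2 * C₂ ^ 2 *
                (2 * (4 + (1 - 2 * L ^ 2 * (α n) ^ 2)) +
                  16 * (1 + α n * L + α n * σ₀ * (C₂ / Real.sqrt (mb (n + 1)))) ^ 2))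
              / (mb (n + 1))) *
            (σ₀ ^ 2 * ‖X n ω - xs‖ ^ 2 + σs ^ 2) := by
  classical
  intro n
  -- basic abbreviations and facts
  have hmn : 𝓕 n ≤ mΩ := (h𝓕le n).trans (h𝓕Ω n)
  have hmhat : 𝓕hat n ≤ mΩ := h𝓕Ω n
  have hmn1 : 𝓕 (n + 1) ≤ mΩ := (h𝓕le (n + 1)).trans (h𝓕Ω (n + 1))
  have ha : (0:ℝ) ≤ α n := (hα n).le
  have hρ0 : 0 ≤ 1 - 2 * L ^ 2 * (α n) ^ 2 := by
    have h := hαL n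
    have h2 : (Real.sqrt 2) ^ 2 = 2 := Real.sq_sqrt (by norm_num)
    nlinarith [mul_nonneg (mul_nonneg (Real.sqrt_nonneg 2) hL.le) ha]
  set ρ : ℝ := 1 - 2 * L ^ 2 * (α n) ^ 2 with hρdef
  have hmpos : (0:ℝ) < (mb (n + 1) : ℝ) := by
    exact_mod_cast Nat.lt_of_lt_of_le Nat.zero_lt_one (hmb (n + 1))
  have hsqm : (0:ℝ) < Real.sqrt (mb (n + 1)) := Real.sqrt_pos.2 hmpos
  set G : ℝ := C₂ / Real.sqrt (mb (n + 1)) with hGdef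
  have hG : 0 < G := div_pos hC₂ hsqm
  have hG2 : G ^ 2 = C₂ ^ 2 / (mb (n + 1) : ℝ) := by
    rw [hGdef, div_pow, Real.sq_sqrt hmpos.le]
  set K : ℝ := 1 + α n * L + α n * σ₀ * G with hKdef
  have hK1 : (1:ℝ) ≤ K := by
    rw [hKdef]
    nlinarith [mul_nonneg ha hL.le, mul_nonneg (mul_nonneg ha hσ₀) hG.le]
  -- continuity of T and proj
  have hTcont : Continuous T := by
    refine (LipschitzWith.of_dist_le_mul (K := L.toNNReal) fun x y => ?_).continuous
    rw [dist_eq_norm, dist_eq_norm, Real.coe_toNNReal L hL.le]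
    exact hLip x y
  have hPcont : Continuous proj := by
    refine (LipschitzWith.of_dist_le_mul (K := 1) fun u v => ?_).continuous
    rw [dist_eq_norm, dist_eq_norm]
    simpa using aux_proj_nonexp proj hproj_mem hproj_char u v
  -- ambient measurability
  have hXsm : StronglyMeasurable (X n) := (hXad n).mono hmn
  have hYsm : StronglyMeasurable (Y n) := (hYad n).mono hmhat
  have hAsm : StronglyMeasurable (A n) := (hAad n).mono hmhat
  have hBsm : StronglyMeasurable (B n) := (hBad n).mono hmn1
  have hZfsm : StronglyMeasurable (fun ω => B n ω - T (Y n ω)) :=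
    hBsm.sub (hTcont.comp_stronglyMeasurable hYsm)
  have hWfsm : StronglyMeasurable (fun ω => A n ω - T (X n ω)) :=
    hAsm.sub (hTcont.comp_stronglyMeasurable hXsm)
  -- pointwise facts
  have hYmem : ∀ ω, Y n ω ∈ 𝒳 := fun ω => by rw [hY n ω]; exact hproj_mem _
  have hTYsol : ∀ ω, 0 ≤ ⟪T (Y n ω), Y n ω - xs⟫ := fun ω =>
    hpm xs (Y n ω) (hxs_sol _ (hYmem ω))
  have hprojY : ∀ ω, ⟪(X n ω - α n • A n ω) - Y n ω, xs - Y n ω⟫ ≤ 0 := fun ω => by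
    rw [hY n ω]; exact hproj_char _ xs hxs_mem
  have hYbd : ∀ ω, ‖Y n ω - xs‖
      ≤ (1 + α n * L) * ‖X n ω - xs‖ + α n * ‖A n ω - T (X n ω)‖ := fun ω =>
    aux_det_Y (α n) L ha hL.le (X n ω) xs (Y n ω) (A n ω) (T (X n ω)) (T xs)
      (hprojY ω) (hxs_sol _ (hYmem ω)) (hLip _ _)
  have hrbd : ∀ ω, ‖X n ω - proj (X n ω - α n • T (X n ω))‖
      ≤ ‖X n ω - Y n ω‖ + α n * ‖A n ω - T (X n ω)‖ := by
    intro ω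
    have t1 : ‖X n ω - proj (X n ω - α n • T (X n ω))‖
        ≤ ‖X n ω - Y n ω‖ + ‖Y n ω - proj (X n ω - α n • T (X n ω))‖ := by
      have e : X n ω - proj (X n ω - α n • T (X n ω))
          = (X n ω - Y n ω) + (Y n ω - proj (X n ω - α n • T (X n ω))) := by abel
      rw [e]; exact norm_add_le _ _
    have t2 : ‖Y n ω - proj (X n ω - α n • T (X n ω))‖ ≤ α n * ‖A n ω - T (X n ω)‖ := by
      rw [hY n ω]
      refine le_trans (aux_proj_nonexp proj hproj_mem hproj_char _ _) ?_
      have e : (X n ω - α n • A n ω) - (X n ω - α n • T (X n ω))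
          = α n • (T (X n ω) - A n ω) := by
        rw [smul_sub]; abel
      rw [e, norm_smul, Real.norm_eq_abs, abs_of_nonneg ha, norm_sub_rev]
    linarith
  -- the key pointwise inequality
  have hP1 : ∀ ω, ‖X (n + 1) ω - xs‖ ^ 2
      ≤ ‖X n ω - xs‖ ^ 2
        - (ρ / 2) * ‖X n ω - proj (X n ω - α n • T (X n ω))‖ ^ 2
        + 2 * α n * ⟪B n ω - T (Y n ω), xs - Y n ω⟫
        + (4 + ρ) * (α n) ^ 2 * ‖A n ω - T (X n ω)‖ ^ 2
        + 4 * (α n) ^ 2 * ‖B n ω - T (Y n ω)‖ ^ 2 := by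
    intro ω
    have hXrw : X (n + 1) ω = Y n ω + α n • ((T (X n ω) + (A n ω - T (X n ω)))
        - (T (Y n ω) + (B n ω - T (Y n ω)))) := by
      rw [hX n ω]; congr 2; abel
    have hproj' : ⟪(X n ω - α n • (T (X n ω) + (A n ω - T (X n ω)))) - Y n ω,
        xs - Y n ω⟫ ≤ 0 := by
      have e : T (X n ω) + (A n ω - T (X n ω)) = A n ω := by abel
      rw [e]; exact hprojY ω
    have h := aux_det_key (α n) L ha (hρdef ▸ hρ0) (X n ω) xs (Y n ω)
      (A n ω - T (X n ω)) (B n ω - T (Y n ω)) (T (X n ω)) (T (Y n ω))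
      (‖X n ω - proj (X n ω - α n • T (X n ω))‖)
      (hLip _ _) (hTYsol ω) hproj' (norm_nonneg _) (hrbd ω)
    rw [← hXrw] at h
    exact h
  -- integrable majorant helpers
  have htint : Integrable (fun ω => ‖X n ω - xs‖ ^ 2) μ := hXint n
  have htsm : StronglyMeasurable (fun ω => ‖X n ω - xs‖ ^ 2) :=
    ((continuous_id.sub continuous_const).norm.pow 2).comp_stronglyMeasurable hXsm
  have hSsq_sm : StronglyMeasurable (fun ω => (σs + σ₀ * ‖X n ω - xs‖) ^ 2) :=
    ((continuous_const.add (continuous_const.mul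
      (continuous_id.sub continuous_const).norm)).pow 2).comp_stronglyMeasurable hXsm
  have hSsq_int : Integrable (fun ω => (σs + σ₀ * ‖X n ω - xs‖) ^ 2) μ := by
    refine Integrable.mono' ((integrable_const (2 * σs ^ 2)).add (htint.const_mul
      (2 * σ₀ ^ 2))) hSsq_sm.aestronglyMeasurable (ae_of_all _ fun ω => ?_)
    have h0 : (0:ℝ) ≤ σs + σ₀ * ‖X n ω - xs‖ :=
      add_nonneg hσs (mul_nonneg hσ₀ (norm_nonneg _))
    rw [Real.norm_eq_abs, abs_of_nonneg (sq_nonneg _)]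
    simp only [Pi.add_apply]
    nlinarith [sq_nonneg (σs - σ₀ * ‖X n ω - xs‖)]
  -- continuity of the residual map
  have hqcont : Continuous (fun v : EuclideanSpace ℝ (Fin d) =>
      ‖v - proj (v - α n • T v)‖ ^ 2) := by
    exact ((continuous_id.sub (hPcont.comp (continuous_id.sub
      (hTcont.const_smul (α n))))).norm.pow 2)
  have hrsq_sm : StronglyMeasurable (fun ω =>
      ‖X n ω - proj (X n ω - α n • T (X n ω))‖ ^ 2) :=
    hqcont.comp_stronglyMeasurable hXsm
  have hrsq_int : Integrable (fun ω =>
      ‖X n ω - proj (X n ω - α n • T (X n ω))‖ ^ 2) μ := by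
    refine Integrable.mono' ((htint.const_mul (2 * (2 + α n * L) ^ 2)).add
      (integrable_const (2 * (α n) ^ 2 * ‖T xs‖ ^ 2)))
      hrsq_sm.aestronglyMeasurable (ae_of_all _ fun ω => ?_)
    have hfix : proj xs = xs := aux_proj_fix proj hproj_char hxs_mem
    have t1 : ‖X n ω - proj (X n ω - α n • T (X n ω))‖
        ≤ ‖X n ω - xs‖ + ‖xs - proj (X n ω - α n • T (X n ω))‖ := by
      have e : X n ω - proj (X n ω - α n • T (X n ω))
          = (X n ω - xs) + (xs - proj (X n ω - α n • T (X n ω))) := by abel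
      rw [e]; exact norm_add_le _ _
    have t2 : ‖xs - proj (X n ω - α n • T (X n ω))‖
        ≤ ‖X n ω - xs‖ + α n * ‖T (X n ω)‖ := by
      calc ‖xs - proj (X n ω - α n • T (X n ω))‖
          = ‖proj xs - proj (X n ω - α n • T (X n ω))‖ := by rw [hfix]
        _ ≤ ‖xs - (X n ω - α n • T (X n ω))‖ :=
            aux_proj_nonexp proj hproj_mem hproj_char _ _
        _ ≤ ‖xs - X n ω‖ + ‖α n • T (X n ω)‖ := by
            have e : xs - (X n ω - α n • T (X n ω))
                = (xs - X n ω) + α n • T (X n ω) := by abel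
            rw [e]; exact norm_add_le _ _
        _ = ‖X n ω - xs‖ + α n * ‖T (X n ω)‖ := by
            rw [norm_sub_rev, norm_smul, Real.norm_eq_abs, abs_of_nonneg ha]
    have t3 : ‖T (X n ω)‖ ≤ L * ‖X n ω - xs‖ + ‖T xs‖ := by
      have := hLip (X n ω) xs
      have h4 : ‖T (X n ω)‖ ≤ ‖T (X n ω) - T xs‖ + ‖T xs‖ := by
        have e : T (X n ω) = (T (X n ω) - T xs) + T xs := by abel
        nth_rewrite 1 [e]; exact norm_add_le _ _
      linarith
    have t4 : ‖X n ω - proj (X n ω - α n • T (X n ω))‖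
        ≤ (2 + α n * L) * ‖X n ω - xs‖ + α n * ‖T xs‖ := by
      have := mul_le_mul_of_nonneg_left t3 ha
      nlinarith
    rw [Real.norm_eq_abs, abs_of_nonneg (sq_nonneg _)]
    simp only [Pi.add_apply]
    have := pow_le_pow_left₀ (norm_nonneg _) t4 2
    nlinarith [sq_nonneg ((2 + α n * L) * ‖X n ω - xs‖ - α n * ‖T xs‖)]
  have hYsq_int : Integrable (fun ω => ‖Y n ω - xs‖ ^ 2) μ := by
    refine Integrable.mono' ((htint.const_mul (2 * (1 + α n * L) ^ 2)).add
      ((hWint n).const_mul (2 * (α n) ^ 2)))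
      (((continuous_id.sub continuous_const).norm.pow 2).comp_stronglyMeasurable
        hYsm).aestronglyMeasurable (ae_of_all _ fun ω => ?_)
    rw [Real.norm_eq_abs, abs_of_nonneg (sq_nonneg _)]
    simp only [Pi.add_apply]
    have h := hYbd ω
    have := pow_le_pow_left₀ (norm_nonneg _) h 2
    nlinarith [sq_nonneg ((1 + α n * L) * ‖X n ω - xs‖ - α n * ‖A n ω - T (X n ω)‖)]
  -- integrability of the inner product term
  have hg1sm : StronglyMeasurable (fun ω => ⟪B n ω - T (Y n ω), xs - Y n ω⟫) := by
    have h : Continuous (fun p : EuclideanSpace ℝ (Fin d) × EuclideanSpace ℝ (Fin d) =>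
        ⟪p.1, p.2⟫) := continuous_inner
    exact h.comp_stronglyMeasurable (hZfsm.prodMk (stronglyMeasurable_const.sub hYsm))
  have hg1int : Integrable (fun ω => ⟪B n ω - T (Y n ω), xs - Y n ω⟫) μ := by
    refine Integrable.mono' (((hZint n).const_mul (1/2)).add
      (hYsq_int.const_mul (1/2))) hg1sm.aestronglyMeasurable (ae_of_all _ fun ω => ?_)
    have h1 := abs_real_inner_le_norm (B n ω - T (Y n ω)) (xs - Y n ω)
    rw [norm_sub_rev xs (Y n ω)] at h1
    rw [Real.norm_eq_abs]
    simp only [Pi.add_apply]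
    nlinarith [sq_nonneg (‖B n ω - T (Y n ω)‖ - ‖Y n ω - xs‖)]
  have hZfint : Integrable (fun ω => B n ω - T (Y n ω)) μ := (hBint n).sub (hTYint n)
  -- D1 : the conditional expectation of the inner product term vanishes
  have hD1 : condExp (𝓕 n) μ (fun ω => ⟪B n ω - T (Y n ω), xs - Y n ω⟫) =ᵐ[μ] 0 := by
    -- coordinates
    have hcoord : ∀ (u : EuclideanSpace ℝ (Fin d)) (i : Fin d),
        (innerSL ℝ (EuclideanSpace.single i (1:ℝ))) u = u i := by
      intro u i
      simp [innerSL_apply_apply, EuclideanSpace.inner_single_left]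
    have habs : ∀ (u : EuclideanSpace ℝ (Fin d)) (i : Fin d), |u i| ≤ ‖u‖ := by
      intro u i
      have h := abs_real_inner_le_norm (EuclideanSpace.single i (1:ℝ)) u
      rw [EuclideanSpace.norm_single] at h
      have hc := hcoord u i
      rw [innerSL_apply_apply] at hc
      rw [← hc]; simpa using h
    -- coordinate conditional expectations vanish
    have hgi0 : ∀ i : Fin d,
        condExp (𝓕hat n) μ (fun ω => (B n ω - T (Y n ω)) i) =ᵐ[μ] 0 := by
      intro i
      have h := aux_condExp_clm (h𝓕Ω n) (innerSL ℝ (EuclideanSpace.single i (1:ℝ))) hZfint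
      simp only [hcoord] at h
      refine h.trans ?_
      filter_upwards [hZ0 n] with ω hω
      rw [hω]
      simp
    -- the coordinate products
    set Fi : Fin d → Ω → ℝ := fun i =>
      (fun ω => (xs - Y n ω) i) * (fun ω => (B n ω - T (Y n ω)) i) with hFidef
    have hfi_sm : ∀ i : Fin d, StronglyMeasurable[𝓕hat n] (fun ω => (xs - Y n ω) i) := by
      intro i
      have h := ((innerSL ℝ (EuclideanSpace.single i (1:ℝ))).continuous).comp_stronglyMeasurable
        ((stronglyMeasurable_const.sub (hYad n)) :
          StronglyMeasurable[𝓕hat n] (fun ω => xs - Y n ω))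
      simp only [hcoord] at h; exact h
    have hgi_int : ∀ i : Fin d, Integrable (fun ω => (B n ω - T (Y n ω)) i) μ := by
      intro i
      have h := (innerSL ℝ (EuclideanSpace.single i (1:ℝ))).integrable_comp hZfint
      simpa only [hcoord] using h
    have hzi_sm : ∀ i : Fin d, StronglyMeasurable (fun ω => (B n ω - T (Y n ω)) i) := by
      intro i
      have h := ((innerSL ℝ (EuclideanSpace.single i (1:ℝ))).continuous).comp_stronglyMeasurable
        hZfsm
      simpa only [hcoord] using h
    have hFi_sm : ∀ i : Fin d, StronglyMeasurable (Fi i) := fun i =>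
      ((hfi_sm i).mono hmhat).mul (hzi_sm i)
    have hFi_bd : ∀ i : Fin d, ∀ ω, |Fi i ω|
        ≤ 1/2 * ‖Y n ω - xs‖ ^ 2 + 1/2 * ‖B n ω - T (Y n ω)‖ ^ 2 := by
      intro i ω
      have h1 : |Fi i ω| = |(xs - Y n ω) i| * |(B n ω - T (Y n ω)) i| := by
        rw [hFidef]; simp [Pi.mul_apply, abs_mul]
      have h2 : |(xs - Y n ω) i| * |(B n ω - T (Y n ω)) i|
          ≤ ‖xs - Y n ω‖ * ‖B n ω - T (Y n ω)‖ :=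
        mul_le_mul (habs _ i) (habs _ i) (abs_nonneg _) (norm_nonneg _)
      rw [norm_sub_rev xs (Y n ω)] at h2
      rw [h1]
      nlinarith [sq_nonneg (‖Y n ω - xs‖ - ‖B n ω - T (Y n ω)‖)]
    have hFi_int : ∀ i : Fin d, Integrable (Fi i) μ := by
      intro i
      refine Integrable.mono' ((hYsq_int.const_mul (1/2)).add
        ((hZint n).const_mul (1/2))) (hFi_sm i).aestronglyMeasurable
        (ae_of_all _ fun ω => ?_)
      rw [Real.norm_eq_abs]
      simp only [Pi.add_apply]
      exact (hFi_bd i ω).trans (by ring_nf; exact le_refl _)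
    have hmul : ∀ i : Fin d, condExp (𝓕hat n) μ (Fi i)
        =ᵐ[μ] (fun ω => (xs - Y n ω) i) * condExp (𝓕hat n) μ (fun ω => (B n ω - T (Y n ω)) i) :=
      fun i => condExp_mul_of_stronglyMeasurable_left (hfi_sm i) (hFi_int i) (hgi_int i)
    have hExp : (fun ω => ⟪B n ω - T (Y n ω), xs - Y n ω⟫) = ∑ i : Fin d, Fi i := by
      funext ω
      rw [Finset.sum_apply, PiLp.inner_apply]
      refine Finset.sum_congr rfl fun i _ => ?_
      rw [hFidef]
      simp only [RCLike.inner_apply, conj_trivial, Pi.mul_apply]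
    have hD1hat : condExp (𝓕hat n) μ (fun ω => ⟪B n ω - T (Y n ω), xs - Y n ω⟫) =ᵐ[μ] 0 := by
      rw [hExp]
      have hsum := condExp_finset_sum (μ := μ) (m := 𝓕hat n)
        (s := Finset.univ) (f := Fi) (fun i _ => hFi_int i)
      refine hsum.trans ?_
      have hall1 : ∀ᵐ ω ∂μ, ∀ i : Fin d, condExp (𝓕hat n) μ (Fi i) ω
          = ((fun ω => (xs - Y n ω) i) *
              condExp (𝓕hat n) μ (fun ω => (B n ω - T (Y n ω)) i)) ω :=
        (ae_all_iff).2 fun i => hmul i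
      have hall2 : ∀ᵐ ω ∂μ, ∀ i : Fin d,
          condExp (𝓕hat n) μ (fun ω => (B n ω - T (Y n ω)) i) ω = 0 := by
        refine (ae_all_iff).2 fun i => ?_
        filter_upwards [hgi0 i] with ω hω
        simpa using hω
      filter_upwards [hall1, hall2] with ω h1 h2
      rw [Finset.sum_apply]
      simp only [Pi.zero_apply]
      refine Finset.sum_eq_zero fun i _ => ?_
      rw [h1 i, Pi.mul_apply, h2 i, mul_zero]
    calc condExp (𝓕 n) μ (fun ω => ⟪B n ω - T (Y n ω), xs - Y n ω⟫)
        =ᵐ[μ] condExp (𝓕 n) μ (condExp (𝓕hat n) μ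
            (fun ω => ⟪B n ω - T (Y n ω), xs - Y n ω⟫)) :=
          (condExp_condExp_of_le (h𝓕le n) (h𝓕Ω n)).symm
      _ =ᵐ[μ] condExp (𝓕 n) μ (0 : Ω → ℝ) := condExp_congr_ae hD1hat
      _ =ᵐ[μ] 0 := by rw [condExp_zero]
  -- D2 : second moment bound on W
  have hD2 : condExp (𝓕 n) μ (fun ω => ‖A n ω - T (X n ω)‖ ^ 2)
      ≤ᵐ[μ] fun ω => G ^ 2 * (σs + σ₀ * ‖X n ω - xs‖) ^ 2 := by
    have hnn : 0 ≤ᵐ[μ] condExp (𝓕 n) μ (fun ω => ‖A n ω - T (X n ω)‖ ^ 2) :=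
      condExp_nonneg (ae_of_all _ fun ω => sq_nonneg _)
    filter_upwards [hWbd n, hnn] with ω h1 h2
    rw [← hGdef] at h1
    have h3 := aux_rpow_sq h2 h1
    calc condExp (𝓕 n) μ (fun ω' => ‖A n ω' - T (X n ω')‖ ^ 2) ω
        ≤ (G * (σs + σ₀ * ‖X n ω - xs‖)) ^ 2 := h3
      _ = G ^ 2 * (σs + σ₀ * ‖X n ω - xs‖) ^ 2 := by ring
  -- Z second moment, first conditioned on the larger σ-algebra
  have hZhat : condExp (𝓕hat n) μ (fun ω => ‖B n ω - T (Y n ω)‖ ^ 2)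
      ≤ᵐ[μ] fun ω => 2 * G ^ 2 * (1 + α n * L) ^ 2 * (σs + σ₀ * ‖X n ω - xs‖) ^ 2
        + 2 * G ^ 2 * (α n) ^ 2 * σ₀ ^ 2 * ‖A n ω - T (X n ω)‖ ^ 2 := by
    have hnn : 0 ≤ᵐ[μ] condExp (𝓕hat n) μ (fun ω => ‖B n ω - T (Y n ω)‖ ^ 2) :=
      condExp_nonneg (ae_of_all _ fun ω => sq_nonneg _)
    filter_upwards [hZbd n, hnn] with ω h1 h2
    rw [← hGdef] at h1
    have hc := aux_rpow_sq h2 h1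
    have hY0 : (0:ℝ) ≤ σs + σ₀ * ‖Y n ω - xs‖ :=
      add_nonneg hσs (mul_nonneg hσ₀ (norm_nonneg _))
    have hlin : σs + σ₀ * ‖Y n ω - xs‖
        ≤ (1 + α n * L) * (σs + σ₀ * ‖X n ω - xs‖)
          + α n * σ₀ * ‖A n ω - T (X n ω)‖ := by
      have h3 := mul_le_mul_of_nonneg_left (hYbd ω) hσ₀
      nlinarith [mul_nonneg (mul_nonneg ha hL.le) hσs]
    have hsq := pow_le_pow_left₀ hY0 hlin 2
    have hexp : (G * (σs + σ₀ * ‖Y n ω - xs‖)) ^ 2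
        = G ^ 2 * (σs + σ₀ * ‖Y n ω - xs‖) ^ 2 := by ring
    rw [hexp] at hc
    have h5 : G ^ 2 * (σs + σ₀ * ‖Y n ω - xs‖) ^ 2
        ≤ G ^ 2 * ((1 + α n * L) * (σs + σ₀ * ‖X n ω - xs‖)
          + α n * σ₀ * ‖A n ω - T (X n ω)‖) ^ 2 :=
      mul_le_mul_of_nonneg_left hsq (sq_nonneg G)
    refine le_trans hc (le_trans h5 ?_)
    nlinarith [sq_nonneg ((1 + α n * L) * (σs + σ₀ * ‖X n ω - xs‖)
      - α n * σ₀ * ‖A n ω - T (X n ω)‖), sq_nonneg G]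
  have hD3 : condExp (𝓕 n) μ (fun ω => ‖B n ω - T (Y n ω)‖ ^ 2)
      ≤ᵐ[μ] fun ω => 2 * G ^ 2 * K ^ 2 * (σs + σ₀ * ‖X n ω - xs‖) ^ 2 := by
    have hmaj : Integrable (fun ω =>
        2 * G ^ 2 * (1 + α n * L) ^ 2 * (σs + σ₀ * ‖X n ω - xs‖) ^ 2
          + 2 * G ^ 2 * (α n) ^ 2 * σ₀ ^ 2 * ‖A n ω - T (X n ω)‖ ^ 2) μ :=
      (hSsq_int.const_mul _).add ((hWint n).const_mul _)
    have htow : condExp (𝓕 n) μ (fun ω => ‖B n ω - T (Y n ω)‖ ^ 2)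
        =ᵐ[μ] condExp (𝓕 n) μ (condExp (𝓕hat n) μ (fun ω => ‖B n ω - T (Y n ω)‖ ^ 2)) :=
      (condExp_condExp_of_le (h𝓕le n) (h𝓕Ω n)).symm
    have hmono := condExp_mono (m := 𝓕 n) integrable_condExp hmaj hZhat
    have hsplit : condExp (𝓕 n) μ (fun ω =>
        2 * G ^ 2 * (1 + α n * L) ^ 2 * (σs + σ₀ * ‖X n ω - xs‖) ^ 2
          + 2 * G ^ 2 * (α n) ^ 2 * σ₀ ^ 2 * ‖A n ω - T (X n ω)‖ ^ 2)
        =ᵐ[μ] (fun ω => 2 * G ^ 2 * (1 + α n * L) ^ 2 * (σs + σ₀ * ‖X n ω - xs‖) ^ 2)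
          + (2 * G ^ 2 * (α n) ^ 2 * σ₀ ^ 2) •
              condExp (𝓕 n) μ (fun ω => ‖A n ω - T (X n ω)‖ ^ 2) := by
      have e : (fun ω =>
          2 * G ^ 2 * (1 + α n * L) ^ 2 * (σs + σ₀ * ‖X n ω - xs‖) ^ 2
            + 2 * G ^ 2 * (α n) ^ 2 * σ₀ ^ 2 * ‖A n ω - T (X n ω)‖ ^ 2)
          = (fun ω => 2 * G ^ 2 * (1 + α n * L) ^ 2 * (σs + σ₀ * ‖X n ω - xs‖) ^ 2)
            + (2 * G ^ 2 * (α n) ^ 2 * σ₀ ^ 2) •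
                (fun ω => ‖A n ω - T (X n ω)‖ ^ 2) := by
        funext ω
        simp only [Pi.add_apply, Pi.smul_apply, smul_eq_mul]
      rw [e]
      refine (condExp_add (hSsq_int.const_mul _) ((hWint n).smul _) (𝓕 n)).trans ?_
      have h1 : condExp (𝓕 n) μ
          (fun ω => 2 * G ^ 2 * (1 + α n * L) ^ 2 * (σs + σ₀ * ‖X n ω - xs‖) ^ 2)
          = fun ω => 2 * G ^ 2 * (1 + α n * L) ^ 2 * (σs + σ₀ * ‖X n ω - xs‖) ^ 2 := by
        refine condExp_of_stronglyMeasurable hmn ?_ (hSsq_int.const_mul _)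
        exact (((continuous_const.add (continuous_const.mul
          (continuous_id.sub continuous_const).norm)).pow 2).comp_stronglyMeasurable
            (hXad n)).const_mul _
      have h2 := condExp_smul (μ := μ) (m := 𝓕 n)
        (2 * G ^ 2 * (α n) ^ 2 * σ₀ ^ 2) (fun ω => ‖A n ω - T (X n ω)‖ ^ 2)
      rw [h1]
      exact (Filter.EventuallyEq.refl _ _).add h2
    filter_upwards [htow, hmono, hsplit, hD2] with ω e1 e2 e3 e4
    rw [e1]
    refine le_trans e2 ?_
    rw [e3]
    simp only [Pi.add_apply, Pi.smul_apply, smul_eq_mul]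
    have h6 : 2 * G ^ 2 * (α n) ^ 2 * σ₀ ^ 2 *
        condExp (𝓕 n) μ (fun ω' => ‖A n ω' - T (X n ω')‖ ^ 2) ω
        ≤ 2 * G ^ 2 * (α n) ^ 2 * σ₀ ^ 2 *
          (G ^ 2 * (σs + σ₀ * ‖X n ω - xs‖) ^ 2) := by
      refine mul_le_mul_of_nonneg_left e4 (by positivity)
    have hKsq : (1 + α n * L) ^ 2 + (α n) ^ 2 * σ₀ ^ 2 * G ^ 2 ≤ K ^ 2 := by
      rw [hKdef]
      nlinarith [mul_nonneg (mul_nonneg ha hσ₀) hG.le, mul_nonneg ha hL.le]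
    have h7 := mul_le_mul_of_nonneg_right hKsq
      (mul_nonneg (by positivity : (0:ℝ) ≤ 2 * G ^ 2)
        (sq_nonneg (σs + σ₀ * ‖X n ω - xs‖)))
    nlinarith [h6, h7]
  -- assemble: conditional expectation of the pointwise inequality
  set f0 : Ω → ℝ := fun ω => ‖X n ω - xs‖ ^ 2
      - ρ / 2 * ‖X n ω - proj (X n ω - α n • T (X n ω))‖ ^ 2 with hf0def
  have hf0int : Integrable f0 μ := htint.sub (hrsq_int.const_mul _)
  have hf0sm : StronglyMeasurable[𝓕 n] f0 := by
    refine StronglyMeasurable.sub ?_ (StronglyMeasurable.const_mul ?_ _)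
    · exact ((continuous_id.sub continuous_const).norm.pow 2).comp_stronglyMeasurable (hXad n)
    · exact hqcont.comp_stronglyMeasurable (hXad n)
  set RHS1 : Ω → ℝ := f0 + ((2 * α n) • (fun ω => ⟪B n ω - T (Y n ω), xs - Y n ω⟫)
      + (((4 + ρ) * (α n) ^ 2) • (fun ω => ‖A n ω - T (X n ω)‖ ^ 2)
        + ((4 * (α n) ^ 2) • (fun ω => ‖B n ω - T (Y n ω)‖ ^ 2)))) with hRHS1def
  have hRHS1 : ∀ ω, RHS1 ω = ‖X n ω - xs‖ ^ 2
      - ρ / 2 * ‖X n ω - proj (X n ω - α n • T (X n ω))‖ ^ 2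
      + 2 * α n * ⟪B n ω - T (Y n ω), xs - Y n ω⟫
      + (4 + ρ) * (α n) ^ 2 * ‖A n ω - T (X n ω)‖ ^ 2
      + 4 * (α n) ^ 2 * ‖B n ω - T (Y n ω)‖ ^ 2 := by
    intro ω
    rw [hRHS1def]
    simp only [Pi.add_apply, Pi.smul_apply, smul_eq_mul, hf0def]
    ring
  have hRHS1int : Integrable RHS1 μ := by
    rw [hRHS1def]
    exact hf0int.add ((hg1int.smul _).add (((hWint n).smul _).add ((hZint n).smul _)))
  have hstep1 : condExp (𝓕 n) μ (fun ω => ‖X (n + 1) ω - xs‖ ^ 2)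
      ≤ᵐ[μ] condExp (𝓕 n) μ RHS1 :=
    condExp_mono (hXint (n + 1)) hRHS1int (ae_of_all _ fun ω => by
      rw [hRHS1 ω]; exact hP1 ω)
  have hadd1 := condExp_add (μ := μ) (m := 𝓕 n) hf0int
    ((hg1int.smul (2 * α n)).add (((hWint n).smul ((4 + ρ) * (α n) ^ 2)).add
      ((hZint n).smul (4 * (α n) ^ 2))))
  have hadd2 := condExp_add (μ := μ) (m := 𝓕 n) (hg1int.smul (2 * α n))
    (((hWint n).smul ((4 + ρ) * (α n) ^ 2)).add ((hZint n).smul (4 * (α n) ^ 2)))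
  have hadd3 := condExp_add (μ := μ) (m := 𝓕 n) ((hWint n).smul ((4 + ρ) * (α n) ^ 2))
    ((hZint n).smul (4 * (α n) ^ 2))
  have hsm1 := condExp_smul (μ := μ) (m := 𝓕 n) (2 * α n)
    (fun ω => ⟪B n ω - T (Y n ω), xs - Y n ω⟫)
  have hsm2 := condExp_smul (μ := μ) (m := 𝓕 n) ((4 + ρ) * (α n) ^ 2)
    (fun ω => ‖A n ω - T (X n ω)‖ ^ 2)
  have hsm3 := condExp_smul (μ := μ) (m := 𝓕 n) (4 * (α n) ^ 2)
    (fun ω => ‖B n ω - T (Y n ω)‖ ^ 2)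
  have hf0eq : condExp (𝓕 n) μ f0 = f0 := condExp_of_stronglyMeasurable hmn hf0sm hf0int
  filter_upwards [hstep1, hadd1, hadd2, hadd3, hsm1, hsm2, hsm3, hD1, hD2, hD3]
    with ω e0 e1 e2 e3 s1 s2 s3 d1 d2 d3
  have eval1 : condExp (𝓕 n) μ RHS1 ω
      = f0 ω
        + (2 * α n) * condExp (𝓕 n) μ (fun ω' => ⟪B n ω' - T (Y n ω'), xs - Y n ω'⟫) ω
        + ((4 + ρ) * (α n) ^ 2) * condExp (𝓕 n) μ (fun ω' => ‖A n ω' - T (X n ω')‖ ^ 2) ω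
        + (4 * (α n) ^ 2) * condExp (𝓕 n) μ (fun ω' => ‖B n ω' - T (Y n ω')‖ ^ 2) ω := by
    rw [hRHS1def, e1, Pi.add_apply, e2, Pi.add_apply, e3, Pi.add_apply, s1, s2, s3, hf0eq]
    simp only [Pi.smul_apply, smul_eq_mul]
    ring
  rw [eval1, d1] at e0
  simp only [Pi.zero_apply, mul_zero, add_zero] at e0
  -- final numeric assembly
  have hS2 : (σs + σ₀ * ‖X n ω - xs‖) ^ 2 ≤ 2 * (σ₀ ^ 2 * ‖X n ω - xs‖ ^ 2 + σs ^ 2) := by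
    nlinarith [sq_nonneg (σs - σ₀ * ‖X n ω - xs‖)]
  have h4ρ : (0:ℝ) ≤ 4 + ρ := by
    rw [hρdef] at hρ0 ⊢
    linarith
  have hb1 : ((4 + ρ) * (α n) ^ 2) * condExp (𝓕 n) μ (fun ω' => ‖A n ω' - T (X n ω')‖ ^ 2) ω
      ≤ ((4 + ρ) * (α n) ^ 2) * (G ^ 2 * (σs + σ₀ * ‖X n ω - xs‖) ^ 2) :=
    mul_le_mul_of_nonneg_left d2 (mul_nonneg h4ρ (sq_nonneg _))
  have hb2 : (4 * (α n) ^ 2) * condExp (𝓕 n) μ (fun ω' => ‖B n ω' - T (Y n ω')‖ ^ 2) ω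
      ≤ (4 * (α n) ^ 2) * (2 * G ^ 2 * K ^ 2 * (σs + σ₀ * ‖X n ω - xs‖) ^ 2) :=
    mul_le_mul_of_nonneg_left d3 (by positivity)
  have hc0 : (0:ℝ) ≤ (α n) ^ 2 * G ^ 2 * ((4 + ρ) + 8 * K ^ 2) := by
    have : (0:ℝ) ≤ 8 * K ^ 2 := by positivity
    have h' : (0:ℝ) ≤ (4 + ρ) + 8 * K ^ 2 := by linarith
    exact mul_nonneg (mul_nonneg (sq_nonneg _) (sq_nonneg _)) h'
  have hfin : ((4 + ρ) * (α n) ^ 2) * (G ^ 2 * (σs + σ₀ * ‖X n ω - xs‖) ^ 2)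
      + (4 * (α n) ^ 2) * (2 * G ^ 2 * K ^ 2 * (σs + σ₀ * ‖X n ω - xs‖) ^ 2)
      ≤ (((α n) ^ 2 * C₂ ^ 2 * (2 * (4 + ρ) + 16 * K ^ 2)) / (mb (n + 1) : ℝ))
        * (σ₀ ^ 2 * ‖X n ω - xs‖ ^ 2 + σs ^ 2) := by
    calc ((4 + ρ) * (α n) ^ 2) * (G ^ 2 * (σs + σ₀ * ‖X n ω - xs‖) ^ 2)
        + (4 * (α n) ^ 2) * (2 * G ^ 2 * K ^ 2 * (σs + σ₀ * ‖X n ω - xs‖) ^ 2)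
        = ((α n) ^ 2 * G ^ 2 * ((4 + ρ) + 8 * K ^ 2)) * (σs + σ₀ * ‖X n ω - xs‖) ^ 2 := by
          ring
      _ ≤ ((α n) ^ 2 * G ^ 2 * ((4 + ρ) + 8 * K ^ 2))
          * (2 * (σ₀ ^ 2 * ‖X n ω - xs‖ ^ 2 + σs ^ 2)) :=
          mul_le_mul_of_nonneg_left hS2 hc0
      _ = (((α n) ^ 2 * C₂ ^ 2 * (2 * (4 + ρ) + 16 * K ^ 2)) / (mb (n + 1) : ℝ))
          * (σ₀ ^ 2 * ‖X n ω - xs‖ ^ 2 + σs ^ 2) := by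
          rw [hG2]
          field_simp
          ring
  have hf0ω : f0 ω = ‖X n ω - xs‖ ^ 2
      - ρ / 2 * ‖X n ω - proj (X n ω - α n • T (X n ω))‖ ^ 2 := by
    rw [hf0def]
  have final1 : condExp (𝓕 n) μ (fun ω' => ‖X (n + 1) ω' - xs‖ ^ 2) ω
      ≤ f0 ω + (((4 + ρ) * (α n) ^ 2) * (G ^ 2 * (σs + σ₀ * ‖X n ω - xs‖) ^ 2)
        + (4 * (α n) ^ 2) * (2 * G ^ 2 * K ^ 2 * (σs + σ₀ * ‖X n ω - xs‖) ^ 2)) := by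
    linarith [e0, hb1, hb2]
  refine final1.trans ?_
  rw [hf0ω]
  linarith [hfin]
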